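/- Let (Q,·) be a right Bol loop of odd (finite) order. If the associated right Bruck loop (Q,∘) given by u∘v = ((v·u^2)·v)^{1/2} is associative, then the right multiplication group Mlt_ρ(Q,·) is nilpotent of class at most 2. -/

import Mathlib

/-- A right Bol loop. -/
class RightBolLoop (Q : Type*) extends Mul Q, One Q, Inv Q where
  one_mul : ∀ a : Q, 1 * a = a
  mul_one : ∀ a : Q, a * 1 = a
  mulLeft_bij : ∀ a : Q, Function.Bijective (fun x : Q => a * x)
  mulRight_bij : ∀ a : Q, Function.Bijective (fun x : Q => x * a)
  mul_inv : ∀ a : Q, a * a⁻¹ = 1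
  inv_mul : ∀ a : Q, a⁻¹ * a = 1
  rbol : ∀ w u v : Q, ((w * u) * v) * u = w * ((u * v) * u)

variable {Q : Type*} [RightBolLoop Q]

instance : Nonempty Q := ⟨1⟩

/-- The right translation `R_a : x ↦ x·a` as a permutation of `Q`. -/
noncomputable def Rt (a : Q) : Equiv.Perm Q :=
  Equiv.ofBijective _ (RightBolLoop.mulRight_bij a)

/-- The square root map (unique square root when squaring is bijective,
e.g. in a finite loop of odd order). -/
noncomputable def sqrt2 (x : Q) : Q := Function.invFun (fun y : Q => y * y) x

/-- The associated Bruck operation `u ∘ v = ((v·u²)·v)^{1/2}`. -/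
noncomputable def bop (u v : Q) : Q := sqrt2 ((v * (u * u)) * v)

open scoped commutatorElement

namespace RBLAux

@[simp] lemma Rt_apply (a x : Q) : Rt a x = x * a := rfl

lemma Rt_one : Rt (1 : Q) = 1 :=
  Equiv.ext fun x => RightBolLoop.mul_one x

lemma Rt_inj : Function.Injective (Rt : Q → Equiv.Perm Q) := by
  intro a b h
  have h1 : Rt a 1 = Rt b 1 := by rw [h]
  simpa [RightBolLoop.one_mul] using h1

lemma Rt_bol (u v : Q) : Rt u * Rt v * Rt u = Rt ((u * v) * u) :=
  Equiv.ext fun x => RightBolLoop.rbol x u v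

lemma Rt_sq (u : Q) : Rt u * Rt u = Rt (u * u) := by
  have h := Rt_bol u 1
  rw [Rt_one] at h
  rw [RightBolLoop.mul_one] at h
  simpa using h

lemma rip (w u : Q) : (w * u) * u⁻¹ = w := by
  have h := RightBolLoop.rbol w u u⁻¹
  rw [RightBolLoop.mul_inv, RightBolLoop.one_mul] at h
  exact (RightBolLoop.mulRight_bij u).injective h

lemma Rt_inv (u : Q) : Rt (u⁻¹) = (Rt u)⁻¹ := by
  apply eq_inv_of_mul_eq_one_left
  exact Equiv.ext fun x => rip x u

lemma inv_invQ (a : Q) : a⁻¹⁻¹ = a :=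
  Rt_inj (by rw [Rt_inv, Rt_inv, inv_inv])

lemma mul_sq (x u : Q) : x * (u * u) = (x * u) * u := by
  have h := congrArg (fun f : Equiv.Perm Q => f x) (Rt_sq u)
  simpa using h.symm

lemma inv_sqQ (z : Q) : (z * z)⁻¹ = z⁻¹ * z⁻¹ :=
  Rt_inj (by rw [Rt_inv, ← Rt_sq, ← Rt_sq, Rt_inv, mul_inv_rev])

lemma inv_triple (a b : Q) : ((a * b) * a)⁻¹ = (a⁻¹ * b⁻¹) * a⁻¹ :=
  Rt_inj (by
    rw [Rt_inv, ← Rt_bol, ← Rt_bol, Rt_inv, Rt_inv]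
    simp [mul_inv_rev, mul_assoc])

lemma Rt_pow (x : Q) : ∀ n : ℕ, Rt (((Rt x) ^ n) 1) = (Rt x) ^ n := by
  intro n
  induction n using Nat.strong_induction_on with
  | _ n ih =>
    match n with
    | 0 => simpa using Rt_one
    | 1 => simp [RightBolLoop.one_mul]
    | (n + 2) =>
      have ihn := ih n (by omega)
      set σ := Rt x with hσ
      have hp1 : x * ((σ ^ n) 1) = (σ ^ (n + 1)) 1 := by
        have e1 : x * ((σ ^ n) 1) = Rt ((σ ^ n) 1) x := rfl
        have e2 : (σ ^ (n + 1)) 1 = (σ ^ n) (σ 1) := by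
          rw [pow_succ]; rfl
        have e3 : σ 1 = 1 * x := rfl
        rw [e1, ihn, e2, e3, RightBolLoop.one_mul]
      have h2 : (σ ^ (n + 2)) 1 = (x * ((σ ^ n) 1)) * x := by
        rw [hp1]
        have : σ ^ (n + 2) = σ * σ ^ (n + 1) := (pow_succ' σ (n + 1))
        rw [this]
        rfl
      rw [h2, ← Rt_bol, ihn]
      rw [show σ * σ ^ n * σ = σ ^ (n + 2) by
        rw [← pow_succ' σ n, ← pow_succ σ (n + 1)]]

lemma Rt_zpow (x : Q) (k : ℤ) : ∃ q : Q, (Rt x) ^ k = Rt q := by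
  cases k with
  | ofNat n => exact ⟨((Rt x) ^ n) 1, by rw [Int.ofNat_eq_coe, zpow_natCast, Rt_pow]⟩
  | negSucc n =>
    refine ⟨((((Rt x) ^ (n + 1)) 1))⁻¹, ?_⟩
    rw [zpow_negSucc, Rt_inv, Rt_pow]

lemma left_cancelQ (a : Q) {b c : Q} (h : a * b = a * c) : b = c :=
  (RightBolLoop.mulLeft_bij a).injective h

lemma orderOf_Rt_dvd [Fintype Q] (x : Q) : orderOf (Rt x) ∣ Fintype.card Q := by
  classical
  set σ := Rt x with hσ
  set Z := Subgroup.zpowers σ with hZ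
  haveI : Fintype Z := Fintype.ofFinite _
  have hstab : ∀ b : Q, MulAction.stabilizer Z b = ⊥ := by
    intro b
    ext g
    simp only [MulAction.mem_stabilizer_iff, Subgroup.mem_bot]
    constructor
    · intro h
      obtain ⟨k, hk⟩ := Subgroup.mem_zpowers_iff.mp g.2
      obtain ⟨q, hq⟩ := Rt_zpow x k
      have hgq : (g : Equiv.Perm Q) = Rt q := by rw [← hk, hq]
      have hb : (g : Equiv.Perm Q) b = b := h
      rw [hgq] at hb
      have : b * q = b * 1 := by
        simpa [RightBolLoop.mul_one] using hb
      have hq1 : q = 1 := left_cancelQ b this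
      apply Subtype.ext
      rw [hgq, hq1, Rt_one]
      rfl
    · intro h
      rw [Subtype.ext_iff] at h
      show (g : Equiv.Perm Q) b = b
      rw [h]
      rfl
  haveI : ∀ b : Q, Fintype (MulAction.orbit Z b) := fun _ => Fintype.ofFinite _
  haveI : ∀ b : Q, Fintype (MulAction.stabilizer Z b) := fun _ => Fintype.ofFinite _
  have horb : ∀ b : Q, Fintype.card (MulAction.orbit Z b) = Fintype.card Z := by
    intro b
    have h1 := MulAction.card_orbit_mul_card_stabilizer_eq_card_group Z b
    have h2 : Fintype.card (MulAction.stabilizer Z b) = 1 := by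
      rw [Fintype.card_eq_one_iff]
      refine ⟨⟨1, Subgroup.one_mem _⟩, ?_⟩
      rintro ⟨y, hy⟩
      have : y ∈ (⊥ : Subgroup Z) := by rw [← hstab b]; exact hy
      rw [Subgroup.mem_bot] at this
      exact Subtype.ext this
    rw [h2, mul_one] at h1
    exact h1
  haveI : Fintype (MulAction.orbitRel.Quotient Z Q) := Fintype.ofFinite _
  have hcards : Fintype.card Q
      = Fintype.card (MulAction.orbitRel.Quotient Z Q) * Fintype.card Z := by
    rw [Fintype.card_congr (MulAction.selfEquivSigmaOrbits Z Q)]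
    rw [Fintype.card_sigma]
    rw [Finset.sum_congr rfl (fun ω _ => horb ω.out)]
    rw [Finset.sum_const, Finset.card_univ, smul_eq_mul]
  have hdvd : Fintype.card Z ∣ Fintype.card Q := ⟨_, by rw [hcards, mul_comm]⟩
  have : orderOf σ = Fintype.card Z := by
    rw [← Nat.card_zpowers, Nat.card_eq_fintype_card]
  rw [this]
  exact hdvd

lemma sq_bij [Fintype Q] (hodd : Odd (Fintype.card Q)) :
    Function.Bijective (fun z : Q => z * z) := by
  classical
  rw [Finite.injective_iff_bijective.symm]
  intro a b h
  simp only at h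
  obtain ⟨m, hm⟩ := hodd
  set N := Fintype.card Q with hN
  have hga : (Rt a) ^ N = 1 := orderOf_dvd_iff_pow_eq_one.mp (orderOf_Rt_dvd a)
  have hgb : (Rt b) ^ N = 1 := orderOf_dvd_iff_pow_eq_one.mp (orderOf_Rt_dvd b)
  have hsq : (Rt a) ^ 2 = (Rt b) ^ 2 := by
    rw [pow_two, pow_two, Rt_sq, Rt_sq, h]
  have key : Rt a = Rt b := by
    have e1 : Rt a = (Rt a) ^ (N + 1) := by rw [pow_succ, hga, one_mul]
    have e2 : Rt b = (Rt b) ^ (N + 1) := by rw [pow_succ, hgb, one_mul]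
    have hN1 : N + 1 = 2 * (m + 1) := by omega
    rw [e1, e2, hN1, pow_mul, pow_mul, hsq]
  exact Rt_inj key

section Sq

variable (hsq : Function.Bijective (fun z : Q => z * z))
include hsq

lemma sqrt_mul_self (x : Q) : sqrt2 (x * x) = x :=
  Function.leftInverse_invFun hsq.injective x

lemma sq_sqrt (x : Q) : sqrt2 x * sqrt2 x = x :=
  Function.invFun_eq (hsq.surjective x)

lemma sq_injQ {x y : Q} (h : x * x = y * y) : x = y := hsq.injective h

lemma bop_one (u : Q) : bop u 1 = u := by
  rw [bop, RightBolLoop.one_mul, RightBolLoop.mul_one, sqrt_mul_self hsq]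

lemma one_bop (v : Q) : bop 1 v = v := by
  rw [bop, RightBolLoop.mul_one, RightBolLoop.mul_one, sqrt_mul_self hsq]

lemma sqrt_one : sqrt2 (1 : Q) = 1 := by
  have := sqrt_mul_self hsq (1 : Q)
  rwa [RightBolLoop.mul_one] at this

lemma bop_inv (u : Q) : bop u u⁻¹ = 1 := by
  rw [bop, mul_sq, RightBolLoop.inv_mul, RightBolLoop.one_mul,
    RightBolLoop.mul_inv, sqrt_one hsq]

lemma bop_sq (u v : Q) : bop u v * bop u v = (v * (u * u)) * v := sq_sqrt hsq _

lemma bop_self (z : Q) : bop z z = z * z := by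
  apply sq_injQ hsq
  rw [bop_sq hsq]
  apply Rt_inj
  rw [← Rt_bol, ← Rt_sq, ← Rt_sq, ← Rt_sq]
  simp [mul_assoc]

lemma bop_aip (u v : Q) : bop u⁻¹ v⁻¹ = (bop u v)⁻¹ := by
  apply sq_injQ hsq
  rw [bop_sq hsq, ← inv_sqQ (bop u v), bop_sq hsq, inv_triple v (u * u), inv_sqQ u]

end Sq

section Assoc

variable (hsq : Function.Bijective (fun z : Q => z * z))
variable (hassoc : ∀ u v w : Q, bop (bop u v) w = bop u (bop v w))
include hsq hassoc

lemma binv_left (u : Q) : bop u⁻¹ u = 1 := by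
  have h1 : bop (bop u⁻¹ u) u⁻¹ = u⁻¹ := by
    rw [hassoc, bop_inv hsq, bop_one hsq]
  calc bop u⁻¹ u = bop (bop u⁻¹ u) 1 := (bop_one hsq _).symm
    _ = bop (bop u⁻¹ u) (bop u⁻¹ u⁻¹⁻¹) := by rw [bop_inv hsq]
    _ = bop (bop (bop u⁻¹ u) u⁻¹) u⁻¹⁻¹ := (hassoc _ _ _).symm
    _ = bop u⁻¹ u⁻¹⁻¹ := by rw [h1]
    _ = 1 := bop_inv hsq _

lemma bcancel (u : Q) {a b : Q} (h : bop u a = bop u b) : a = b := by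
  calc a = bop 1 a := (one_bop hsq a).symm
    _ = bop (bop u⁻¹ u) a := by rw [binv_left hsq hassoc]
    _ = bop u⁻¹ (bop u a) := hassoc _ _ _
    _ = bop u⁻¹ (bop u b) := by rw [h]
    _ = bop (bop u⁻¹ u) b := (hassoc _ _ _).symm
    _ = bop 1 b := by rw [binv_left hsq hassoc]
    _ = b := one_bop hsq b

lemma binv_anti (u v : Q) : (bop u v)⁻¹ = bop v⁻¹ u⁻¹ := by
  apply bcancel hsq hassoc (bop u v)
  rw [bop_inv hsq]
  rw [hassoc, ← hassoc v v⁻¹ u⁻¹, bop_inv hsq, one_bop hsq, bop_inv hsq]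

lemma bcomm (u v : Q) : bop u v = bop v u := by
  have key : ∀ a b : Q, bop a⁻¹ b⁻¹ = bop b⁻¹ a⁻¹ := by
    intro a b
    rw [bop_aip hsq, binv_anti hsq hassoc]
  have := key u⁻¹ v⁻¹
  rwa [inv_invQ, inv_invQ] at this

lemma keyC (u v : Q) : Rt u * Rt (v * v) * Rt u = Rt v * Rt (u * u) * Rt v := by
  have h : bop v u * bop v u = bop u v * bop u v := by rw [bcomm hsq hassoc u v]
  rw [bop_sq hsq, bop_sq hsq] at h
  rw [Rt_bol, Rt_bol]
  exact congrArg Rt h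

lemma star (u v : Q) : (v * u) * v = bop u (v * v) := by
  apply sq_injQ hsq
  have hR : Rt (((v * u) * v) * ((v * u) * v)) = Rt ((((v * v) * (u * u)) * (v * v))) := by
    calc Rt (((v * u) * v) * ((v * u) * v))
        = Rt ((v * u) * v) * Rt ((v * u) * v) := (Rt_sq _).symm
      _ = (Rt v * Rt u * Rt v) * (Rt v * Rt u * Rt v) := by rw [Rt_bol]
      _ = Rt v * (Rt u * (Rt v * Rt v) * Rt u) * Rt v := by simp only [mul_assoc]
      _ = Rt v * (Rt u * Rt (v * v) * Rt u) * Rt v := by rw [Rt_sq]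
      _ = Rt v * (Rt v * Rt (u * u) * Rt v) * Rt v := by rw [keyC hsq hassoc]
      _ = (Rt v * Rt v) * Rt (u * u) * (Rt v * Rt v) := by simp only [mul_assoc]
      _ = Rt (v * v) * Rt (u * u) * Rt (v * v) := by rw [Rt_sq]
      _ = Rt (((v * v) * (u * u)) * (v * v)) := Rt_bol _ _
  have := Rt_inj hR
  rw [this, ← bop_sq hsq]

lemma conj1 (y u : Q) :
    Rt y * Rt u * (Rt y)⁻¹ = Rt (bop u (y * y)) * (Rt (y * y))⁻¹ := by
  have h1 : Rt y * Rt u * Rt y = Rt (bop u (y * y)) := by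
    rw [Rt_bol, star hsq hassoc]
  calc Rt y * Rt u * (Rt y)⁻¹
      = (Rt y * Rt u * Rt y) * ((Rt y)⁻¹ * (Rt y)⁻¹) := by group
    _ = Rt (bop u (y * y)) * ((Rt y * Rt y)⁻¹) := by rw [h1, mul_inv_rev]
    _ = Rt (bop u (y * y)) * (Rt (y * y))⁻¹ := by rw [Rt_sq]

lemma bswap (e f : Q) :
    bop (bop f⁻¹ e) (e⁻¹ * e⁻¹) = bop (bop e⁻¹ f) (f⁻¹ * f⁻¹) := by
  rw [← bop_self hsq e⁻¹, ← bop_self hsq f⁻¹]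
  rw [hassoc, hassoc, ← hassoc e e⁻¹ e⁻¹, ← hassoc f f⁻¹ f⁻¹,
    bop_inv hsq, bop_inv hsq, one_bop hsq, one_bop hsq]
  exact bcomm hsq hassoc _ _

lemma stepA (x y u : Q) :
    (Rt x * Rt y) * Rt u * (Rt x * Rt y)⁻¹
      = (Rt y * Rt x) * Rt u * (Rt y * Rt x)⁻¹ := by
  have expand : ∀ a b w : Q,
      (Rt a * Rt b) * Rt w * (Rt a * Rt b)⁻¹
        = Rt (bop (bop w (b * b)) (a * a))
          * Rt (bop (bop (b * b)⁻¹ (a * a)) ((a * a)⁻¹ * (a * a)⁻¹)) := by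
    intro a b w
    have h1 : (Rt a * Rt b) * Rt w * (Rt a * Rt b)⁻¹
        = Rt a * (Rt b * Rt w * (Rt b)⁻¹) * (Rt a)⁻¹ := by group
    rw [h1, conj1 hsq hassoc]
    have h2 : Rt a * (Rt (bop w (b * b)) * (Rt (b * b))⁻¹) * (Rt a)⁻¹
        = (Rt a * Rt (bop w (b * b)) * (Rt a)⁻¹)
          * (Rt a * (Rt (b * b))⁻¹ * (Rt a)⁻¹) := by group
    rw [h2, conj1 hsq hassoc, ← Rt_inv (b * b), conj1 hsq hassoc]
    have h3 : Rt (bop (bop w (b * b)) (a * a)) * (Rt (a * a))⁻¹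
          * (Rt (bop (b * b)⁻¹ (a * a)) * (Rt (a * a))⁻¹)
        = Rt (bop (bop w (b * b)) (a * a))
          * ((Rt (a * a))⁻¹ * Rt (bop (b * b)⁻¹ (a * a)) * (Rt (a * a))⁻¹) := by
      group
    rw [h3, ← Rt_inv (a * a), Rt_bol, star hsq hassoc]
  rw [expand, expand]
  congr 1
  · apply congrArg Rt
    rw [hassoc, hassoc, bcomm hsq hassoc (y * y) (x * x)]
  · apply congrArg Rt
    exact bswap hsq hassoc (x * x) (y * y)

end Assoc

section Group

variable (hsq : Function.Bijective (fun z : Q => z * z))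
variable (hassoc : ∀ u v w : Q, bop (bop u v) w = bop u (bop v w))
include hsq hassoc

lemma stepB (x y : Q) {g : Equiv.Perm Q}
    (hg : g ∈ Subgroup.closure (Set.range (Rt : Q → Equiv.Perm Q))) :
    (Rt x * Rt y) * g * (Rt x * Rt y)⁻¹ = (Rt y * Rt x) * g * (Rt y * Rt x)⁻¹ := by
  induction hg using Subgroup.closure_induction with
  | mem w hw =>
    obtain ⟨u, rfl⟩ := hw
    exact stepA hsq hassoc x y u
  | one => group
  | mul a b _ _ ha hb =>
    have : (Rt x * Rt y) * (a * b) * (Rt x * Rt y)⁻¹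
        = ((Rt x * Rt y) * a * (Rt x * Rt y)⁻¹) * ((Rt x * Rt y) * b * (Rt x * Rt y)⁻¹) := by
      group
    rw [this, ha, hb]
    group
  | inv a _ ha =>
    have h1 : (Rt x * Rt y) * a⁻¹ * (Rt x * Rt y)⁻¹
        = ((Rt x * Rt y) * a * (Rt x * Rt y)⁻¹)⁻¹ := by group
    rw [h1, ha]
    group

lemma stepC (a b : Q) {g : Equiv.Perm Q}
    (hg : g ∈ Subgroup.closure (Set.range (Rt : Q → Equiv.Perm Q))) :
    ⁅Rt a, Rt b⁆ * g = g * ⁅Rt a, Rt b⁆ := by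
  have h := stepB hsq hassoc a⁻¹ b⁻¹ hg
  set c := Rt a⁻¹ * Rt b⁻¹ with hc
  set d := Rt b⁻¹ * Rt a⁻¹ with hd
  have h2 : (d⁻¹ * c) * g = g * (d⁻¹ * c) := by
    have := congrArg (fun z => d⁻¹ * z * c) h
    simpa [mul_assoc] using this
  have h3 : d⁻¹ * c = ⁅Rt a, Rt b⁆ := by
    rw [hc, hd, Rt_inv a, Rt_inv b, commutatorElement_def]
    group
  rwa [h3] at h2

lemma stepD {g h k : Equiv.Perm Q}
    (hg : g ∈ Subgroup.closure (Set.range (Rt : Q → Equiv.Perm Q)))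
    (hh : h ∈ Subgroup.closure (Set.range (Rt : Q → Equiv.Perm Q)))
    (hk : k ∈ Subgroup.closure (Set.range (Rt : Q → Equiv.Perm Q))) :
    ⁅g, h⁆ * k = k * ⁅g, h⁆ := by
  set H := Subgroup.closure (Set.range (Rt : Q → Equiv.Perm Q)) with hH
  -- first: commutators of a generator with anything in H centralize H
  have claim1 : ∀ s : Q, ∀ {h : Equiv.Perm Q}, h ∈ H →
      ∀ {k : Equiv.Perm Q}, k ∈ H → ⁅Rt s, h⁆ * k = k * ⁅Rt s, h⁆ := by
    intro s h hh
    induction hh using Subgroup.closure_induction with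
    | mem w hw =>
      obtain ⟨b, rfl⟩ := hw
      intro k hk
      exact stepC hsq hassoc s b hk
    | one => intro k hk; simp
    | mul a b ha hb iha ihb =>
      intro k hk
      have hcomm : ⁅Rt s, a * b⁆ = ⁅Rt s, a⁆ * (a * ⁅Rt s, b⁆ * a⁻¹) := by
        simp only [commutatorElement_def]; group
      have hconj : a * ⁅Rt s, b⁆ * a⁻¹ = ⁅Rt s, b⁆ := by
        have := ihb ha
        calc a * ⁅Rt s, b⁆ * a⁻¹ = (⁅Rt s, b⁆ * a) * a⁻¹ := by rw [← this]
          _ = ⁅Rt s, b⁆ := by group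
      rw [hcomm, hconj, mul_assoc, ihb hk, ← mul_assoc, iha hk, mul_assoc]
    | inv a ha iha =>
      intro k hk
      have hid : ⁅Rt s, a⁻¹⁆ = a⁻¹ * ⁅Rt s, a⁆⁻¹ * a := by
        simp only [commutatorElement_def]; group
      have hconj : a⁻¹ * ⁅Rt s, a⁆⁻¹ * a = ⁅Rt s, a⁆⁻¹ := by
        have h1 : Commute ⁅Rt s, a⁆ a⁻¹ := iha (inv_mem ha)
        have h2 : ⁅Rt s, a⁆⁻¹ * a⁻¹ = a⁻¹ * ⁅Rt s, a⁆⁻¹ := h1.inv_left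
        calc a⁻¹ * ⁅Rt s, a⁆⁻¹ * a = (⁅Rt s, a⁆⁻¹ * a⁻¹) * a := by rw [← h2]
          _ = ⁅Rt s, a⁆⁻¹ := by group
      rw [hid, hconj]
      exact (show Commute ⁅Rt s, a⁆ k from iha hk).inv_left
  -- now induct on g
  revert k
  induction hg using Subgroup.closure_induction with
  | mem w hw =>
    obtain ⟨s, rfl⟩ := hw
    intro k hk
    exact claim1 s hh hk
  | one => intro k hk; simp
  | mul a b ha hb iha ihb =>
    intro k hk
    have hcomm : ⁅a * b, h⁆ = (a * ⁅b, h⁆ * a⁻¹) * ⁅a, h⁆ := by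
      simp only [commutatorElement_def]; group
    have hconj : a * ⁅b, h⁆ * a⁻¹ = ⁅b, h⁆ := by
      have := ihb ha
      calc a * ⁅b, h⁆ * a⁻¹ = (⁅b, h⁆ * a) * a⁻¹ := by rw [← this]
        _ = ⁅b, h⁆ := by group
    rw [hcomm, hconj, mul_assoc, iha hk, ← mul_assoc, ihb hk, mul_assoc]
  | inv a ha iha =>
    intro k hk
    have hid : ⁅a⁻¹, h⁆ = a⁻¹ * ⁅a, h⁆⁻¹ * a := by
      simp only [commutatorElement_def]; group
    have hconj : a⁻¹ * ⁅a, h⁆⁻¹ * a = ⁅a, h⁆⁻¹ := by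
      have h1 : Commute ⁅a, h⁆ a⁻¹ := iha (inv_mem ha)
      have h2 : ⁅a, h⁆⁻¹ * a⁻¹ = a⁻¹ * ⁅a, h⁆⁻¹ := h1.inv_left
      calc a⁻¹ * ⁅a, h⁆⁻¹ * a = (⁅a, h⁆⁻¹ * a⁻¹) * a := by rw [← h2]
        _ = ⁅a, h⁆⁻¹ := by group
    rw [hid, hconj]
    exact (show Commute ⁅a, h⁆ k from iha hk).inv_left

end Group

end RBLAux

/-- Let `(Q,·)` be a right Bol loop of odd finite order. If the associated
right Bruck loop `(Q,∘)`, `u ∘ v = ((v·u²)·v)^{1/2}`, is associative, then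
the right multiplication group `Mlt_ρ(Q,·)` is nilpotent of class at most 2,
i.e. its lower central series reaches the trivial subgroup at step 2. -/
theorem stmt12 [Fintype Q] (hodd : Odd (Fintype.card Q))
    (hassoc : ∀ u v w : Q, bop (bop u v) w = bop u (bop v w)) :
    Subgroup.lowerCentralSeries (⊤ : Subgroup (↥(Subgroup.closure (Set.range (Rt : Q → Equiv.Perm Q))))) 2 = ⊥ := by
  have hsq := RBLAux.sq_bij hodd
  set H := Subgroup.closure (Set.range (Rt : Q → Equiv.Perm Q)) with hH
  have hcent : ∀ p q : ↥H, ⁅p, q⁆ ∈ Subgroup.center ↥H := by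
    intro p q
    rw [Subgroup.mem_center_iff]
    intro r
    have hd := RBLAux.stepD hsq hassoc p.2 q.2 r.2
    apply Subtype.ext
    show (r : Equiv.Perm Q) * ⁅(p : Equiv.Perm Q), (q : Equiv.Perm Q)⁆
        = ⁅(p : Equiv.Perm Q), (q : Equiv.Perm Q)⁆ * (r : Equiv.Perm Q)
    exact hd.symm
  have hlcs : Subgroup.lowerCentralSeries (⊤ : Subgroup ↥H) 2 = ⁅(⁅(⊤ : Subgroup ↥H), ⊤⁆ : Subgroup ↥H), ⊤⁆ := rfl
  rw [hlcs]
  rw [Subgroup.commutator_eq_bot_iff_le_centralizer]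
  rw [Subgroup.commutator_le]
  intro g _ h _
  apply Subgroup.mem_centralizer_iff.mpr
  intro k _
  have := hcent g h
  rw [Subgroup.mem_center_iff] at this
  exact this k
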